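/- Let P and Q = P + E be irreducible row-stochastic n×n matrices with stationary distributions π(P) and π(Q) (row vectors with πP = π, nonnegative entries summing to 1). If the ergodicity coefficient τ₁(P) < 1, then the total variation distance satisfies D(π(P), π(Q)) = (1/2)‖π(P) − π(Q)‖₁ ≤ ‖E‖_∞ / (2(1 − τ₁(P))). -/
import Mathlib


/-- Perturbation bound for stationary distributions: if `P` and `Q = P + E` are
irreducible row-stochastic matrices with stationary distributions `πP`, `πQ`, and
the ergodicity coefficient `τ₁(P) < 1`, then the total variation distance
satisfies `(1/2)‖πP - πQ‖₁ ≤ ‖E‖_∞ / (2 (1 - τ₁(P)))`. -/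
theorem stationary_distribution_perturbation {n : ℕ}
    (P Q E : Matrix (Fin n) (Fin n) ℝ) (hE : Q = P + E)
    (hPnonneg : ∀ i j, 0 ≤ P i j) (hProw : ∀ i, ∑ j, P i j = 1)
    (hQnonneg : ∀ i j, 0 ≤ Q i j) (hQrow : ∀ i, ∑ j, Q i j = 1)
    (hPirred : ∀ i j, ∃ k : ℕ, 0 < (P ^ k) i j)
    (hQirred : ∀ i j, ∃ k : ℕ, 0 < (Q ^ k) i j)
    (πP πQ : Fin n → ℝ)
    (hπPnonneg : ∀ x, 0 ≤ πP x) (hπPsum : ∑ x, πP x = 1)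
    (hπPstat : ∀ j, ∑ i, πP i * P i j = πP j)
    (hπQnonneg : ∀ x, 0 ≤ πQ x) (hπQsum : ∑ x, πQ x = 1)
    (hπQstat : ∀ j, ∑ i, πQ i * Q i j = πQ j)
    (τ : ℝ)
    (hτ : τ = sSup {x : ℝ | ∃ v : Fin n → ℝ, (∑ i, |v i|) = 1 ∧ (∑ i, v i) = 0 ∧
        x = ∑ j, |∑ i, v i * P i j|})
    (hτlt : τ < 1) :
    (1 / 2) * ∑ x, |πP x - πQ x| ≤ (⨆ i, ∑ j, |E i j|) / (2 * (1 - τ)) := by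
  have hne : Nonempty (Fin n) := by
    by_contra h
    rw [not_nonempty_iff] at h
    simp at hπPsum
  set v : Fin n → ℝ := fun i => πP i - πQ i with hv
  set S : ℝ := ∑ i, |v i| with hS
  set M : ℝ := ⨆ i, ∑ j, |E i j| with hM
  have hMbdd : BddAbove (Set.range fun i => ∑ j, |E i j|) :=
    Set.Finite.bddAbove (Set.finite_range _)
  have hMle : ∀ i, ∑ j, |E i j| ≤ M := fun i => le_ciSup hMbdd i
  have hM0 : 0 ≤ M :=
    le_trans (Finset.sum_nonneg fun j _ => abs_nonneg _) (hMle (Classical.arbitrary _))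
  have hSsum0 : ∑ i, v i = 0 := by
    simp [hv, Finset.sum_sub_distrib, hπPsum, hπQsum]
  have hvP : ∀ j, ∑ i, v i * P i j = v j + ∑ i, πQ i * E i j := by
    intro j
    have h2 := hπQstat j
    simp only [hE, Matrix.add_apply, mul_add, Finset.sum_add_distrib] at h2
    have h3 := hπPstat j
    have : ∑ i, v i * P i j = (∑ i, πP i * P i j) - ∑ i, πQ i * P i j := by
      simp [hv, sub_mul, Finset.sum_sub_distrib]
    rw [this, h3]
    have : v j = πP j - πQ j := rfl
    linarith
  have hS0 : 0 ≤ S := Finset.sum_nonneg fun i _ => abs_nonneg _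
  -- bound on the set defining τ
  have hbdd : BddAbove {x : ℝ | ∃ w : Fin n → ℝ, (∑ i, |w i|) = 1 ∧ (∑ i, w i) = 0 ∧
      x = ∑ j, |∑ i, w i * P i j|} := by
    refine ⟨1, ?_⟩
    rintro x ⟨w, hw1, hw0, rfl⟩
    calc ∑ j, |∑ i, w i * P i j| ≤ ∑ j, ∑ i, |w i| * P i j := by
          refine Finset.sum_le_sum fun j _ => ?_
          refine le_trans (Finset.abs_sum_le_sum_abs _ _) ?_
          refine Finset.sum_le_sum fun i _ => ?_
          rw [abs_mul, abs_of_nonneg (hPnonneg i j)]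
      _ = ∑ i, |w i| * ∑ j, P i j := by
          rw [Finset.sum_comm]; simp [Finset.mul_sum]
      _ = 1 := by simp [hProw, hw1]
  have hτS : ∑ j, |∑ i, v i * P i j| ≤ τ * S := by
    rcases eq_or_lt_of_le hS0 with h0 | hpos
    · have hzero : ∀ i, v i = 0 := by
        intro i
        have := (Finset.sum_eq_zero_iff_of_nonneg (fun i _ => abs_nonneg (v i))).1 h0.symm i
          (Finset.mem_univ i)
        exact abs_eq_zero.mp this
      simp [hzero, ← h0]
    · set w : Fin n → ℝ := fun i => v i / S with hw
      have hw1 : ∑ i, |w i| = 1 := by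
        simp only [hw, abs_div, abs_of_pos hpos]
        rw [← Finset.sum_div]
        exact div_self (ne_of_gt hpos)
      have hw0 : ∑ i, w i = 0 := by
        simp only [hw]
        rw [← Finset.sum_div, hSsum0, zero_div]
      have hmem : (∑ j, |∑ i, w i * P i j|) ∈ {x : ℝ | ∃ w : Fin n → ℝ,
          (∑ i, |w i|) = 1 ∧ (∑ i, w i) = 0 ∧ x = ∑ j, |∑ i, w i * P i j|} :=
        ⟨w, hw1, hw0, rfl⟩
      have hle : (∑ j, |∑ i, w i * P i j|) ≤ τ := by
        rw [hτ]; exact le_csSup hbdd hmem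
      have heq : ∑ j, |∑ i, v i * P i j| = S * ∑ j, |∑ i, w i * P i j| := by
        rw [Finset.mul_sum]
        refine Finset.sum_congr rfl fun j _ => ?_
        rw [← abs_of_pos hpos, ← abs_mul, Finset.mul_sum]
        congr 1
        refine Finset.sum_congr rfl fun i _ => ?_
        simp only [hw]
        field_simp
      rw [heq]
      calc S * ∑ j, |∑ i, w i * P i j| ≤ S * τ := by
            exact mul_le_mul_of_nonneg_left hle hS0
        _ = τ * S := mul_comm _ _
  have hπQE : ∑ j, |∑ i, πQ i * E i j| ≤ M := by
    calc ∑ j, |∑ i, πQ i * E i j| ≤ ∑ j, ∑ i, πQ i * |E i j| := by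
          refine Finset.sum_le_sum fun j _ => ?_
          refine le_trans (Finset.abs_sum_le_sum_abs _ _) ?_
          refine Finset.sum_le_sum fun i _ => ?_
          rw [abs_mul, abs_of_nonneg (hπQnonneg i)]
      _ = ∑ i, πQ i * ∑ j, |E i j| := by
          rw [Finset.sum_comm]; simp [Finset.mul_sum]
      _ ≤ ∑ i, πQ i * M := by
          exact Finset.sum_le_sum fun i _ => mul_le_mul_of_nonneg_left (hMle i) (hπQnonneg i)
      _ = M := by rw [← Finset.sum_mul, hπQsum, one_mul]
  have hkey : S ≤ τ * S + M := by
    have hstep : ∀ j, |v j| ≤ |∑ i, v i * P i j| + |∑ i, πQ i * E i j| := by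
      intro j
      have h1 := hvP j
      have h2 : v j = (∑ i, v i * P i j) - ∑ i, πQ i * E i j := by linarith
      rw [h2]
      exact abs_sub _ _
    calc S ≤ ∑ j, (|∑ i, v i * P i j| + |∑ i, πQ i * E i j|) :=
          Finset.sum_le_sum fun j _ => hstep j
      _ = (∑ j, |∑ i, v i * P i j|) + ∑ j, |∑ i, πQ i * E i j| := Finset.sum_add_distrib
      _ ≤ τ * S + M := add_le_add hτS hπQE
  have h1τ : 0 < 1 - τ := by linarith
  rw [le_div_iff₀ (by positivity : (0:ℝ) < 2 * (1 - τ))]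
  have : (1:ℝ)/2 * S * (2 * (1 - τ)) = S * (1 - τ) := by ring
  show (1:ℝ)/2 * S * (2 * (1 - τ)) ≤ M
  rw [this]
  nlinarith
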